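/- Let n < r be positive integers and v₁,…,v_r ∈ ℤⁿ with v_i = e_i for 1 ≤ i ≤ n and v₁+⋯+v_r = 0. Let a ∈ ℤ^r with a_j = 0 for 1 ≤ j ≤ n and P(a)∩ℤⁿ ≠ ∅, and let w ∈ P(a)∩ℤⁿ be a point maximizing the coordinate sum u₁+⋯+uₙ over P(a)∩ℤⁿ. Then (d/dx₁)_q^{w₁} ∘ ⋯ ∘ (d/dxₙ)_q^{wₙ} applied to RS_a(x;q) is a nonzero constant, i.e. a nonzero element of ℚ(q). -/

import Mathlib

noncomputable section
open MvPolynomial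

/-- `(q;q)_d = ∏_{k=1}^d (1 - q^k)` in `ℚ(q)`. -/
def qqPoch (q : RatFunc ℚ) (d : ℕ) : RatFunc ℚ :=
  ∏ k ∈ Finset.range d, (1 - q ^ (k + 1))

/-- The substitution operator `T_{i,q} : f(x₁,…,x_i,…,xₙ) ↦ f(x₁,…,q·x_i,…,xₙ)`. -/
def Tq {n : ℕ} (i : Fin n) (f : MvPolynomial (Fin n) (RatFunc ℚ)) :
    MvPolynomial (Fin n) (RatFunc ℚ) :=
  aeval (fun j : Fin n => if j = i then C RatFunc.X * X j else X j) f

/-- The `i`-th Jackson (partial `q`-)derivative `(d/dx_i)_q f = (f − T_{i,q} f)/((1−q)x_i)`;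
the numerator `f − T_{i,q} f` is exactly divisible by the monomial `x_i`. -/
def jackson {n : ℕ} (i : Fin n) (f : MvPolynomial (Fin n) (RatFunc ℚ)) :
    MvPolynomial (Fin n) (RatFunc ℚ) :=
  C (1 - RatFunc.X : RatFunc ℚ)⁻¹ * ((f - Tq i f).divMonomial (Finsupp.single i 1))

/-- The generalized Rogers–Szegő polynomial
`RS_a(x;q) = Σ_{u ∈ P(a)∩ℤⁿ} [|a|; ⟨u,v₁⟩+a₁,…,⟨u,v_r⟩+a_r]_q x₁^{u₁}⋯xₙ^{uₙ}`,
where `P(a) = {u ∈ ℝⁿ : ⟨u,v_i⟩ ≥ −a_i for all i}` lies in the nonnegative orthant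
(so its lattice points are indexed by `u : Fin n → ℕ`); the sum is a finite sum
(`∑ᶠ`, a finitely supported sum), equal to `0` if `P(a)∩ℤⁿ = ∅`. -/
def RSgen (n r : ℕ) (v : Fin r → Fin n → ℤ) (a : Fin r → ℤ) :
    MvPolynomial (Fin n) (RatFunc ℚ) :=
  ∑ᶠ u : Fin n → ℕ,
    if ∀ i, -(a i) ≤ ∑ j, (u j : ℤ) * v i j then
      monomial (Finsupp.equivFunOnFinite.symm u)
        (qqPoch RatFunc.X (∑ i, a i).toNat /
          ∏ i, qqPoch RatFunc.X ((∑ j, (u j : ℤ) * v i j) + a i).toNat)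
    else 0

lemma one_sub_X_pow_ne {m : ℕ} (hm : 0 < m) : (1 : RatFunc ℚ) - RatFunc.X ^ m ≠ 0 := by
  have h1 : (1 : RatFunc ℚ) - RatFunc.X ^ m =
      algebraMap (Polynomial ℚ) (RatFunc ℚ) (1 - Polynomial.X ^ m) := by
    simp [map_sub, map_pow, RatFunc.algebraMap_X]
  rw [h1, ne_eq, map_eq_zero_iff _ (RatFunc.algebraMap_injective ℚ)]
  intro h
  have := congrArg (Polynomial.coeff · m) h
  simp [Polynomial.coeff_one, Nat.pos_iff_ne_zero.mp hm] at this

lemma qqPoch_ne (d : ℕ) : qqPoch RatFunc.X d ≠ 0 := by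
  refine Finset.prod_ne_zero_iff.mpr fun k _ => one_sub_X_pow_ne (Nat.succ_pos k)

lemma Tq_monomial {n : ℕ} (i : Fin n) (d : Fin n →₀ ℕ) (c : RatFunc ℚ) :
    Tq i (monomial d c) = monomial d (RatFunc.X ^ (d i) * c) := by
  classical
  rw [Tq, aeval_monomial]
  have h1 : (d.prod fun j e => (if j = i then C RatFunc.X * X j else X j) ^ e)
      = (C (RatFunc.X ^ (d i)) : MvPolynomial (Fin n) (RatFunc ℚ)) *
        d.prod fun j e => (X j) ^ e := by
    rw [Finsupp.prod_congr (g2 := fun j e =>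
      ((if j = i then (C (RatFunc.X) : MvPolynomial (Fin n) (RatFunc ℚ)) ^ e else 1) * (X j) ^ e))
      (by intro x hx; by_cases h : x = i <;> simp [h, mul_pow])]
    rw [Finsupp.prod_mul]
    congr 1
    rw [Finsupp.prod_ite_eq' d i (fun j e => (C (RatFunc.X) : MvPolynomial (Fin n) (RatFunc ℚ)) ^ e)]
    split
    · rw [map_pow]
    · next h => rw [Finsupp.notMem_support_iff.mp h]; simp
  rw [h1, monomial_eq, algebraMap_eq, map_mul]
  ring

lemma jackson_monomial {n : ℕ} (i : Fin n) (d : Fin n →₀ ℕ) (c : RatFunc ℚ) :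
    jackson i (monomial d c) =
      monomial (d - Finsupp.single i 1)
        ((1 - RatFunc.X)⁻¹ * (1 - RatFunc.X ^ (d i)) * c) := by
  classical
  rw [jackson, Tq_monomial, ← map_sub]
  rcases Nat.eq_zero_or_pos (d i) with h | h
  · simp [h]
  · have hle : Finsupp.single i 1 ≤ d := by
      rw [Finsupp.single_le_iff]; exact h
    have hsplit : (monomial d (c - RatFunc.X ^ d i * c) : MvPolynomial (Fin n) (RatFunc ℚ)) =
        monomial (d - Finsupp.single i 1) (c - RatFunc.X ^ d i * c) *
          monomial (Finsupp.single i 1) 1 := by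
      rw [monomial_mul, mul_one, tsub_add_cancel_of_le hle]
    rw [hsplit, MvPolynomial.divMonomial_mul_monomial, C_mul_monomial]
    ring_nf

lemma jackson_iterate {n : ℕ} (i : Fin n) (k : ℕ) (d : Fin n →₀ ℕ) (c : RatFunc ℚ) :
    (jackson i)^[k] (monomial d c) =
      monomial (d - Finsupp.single i k)
        ((∏ t ∈ Finset.range k, (1 - RatFunc.X)⁻¹ * (1 - RatFunc.X ^ (d i - t))) * c) := by
  induction k with
  | zero => simp
  | succ k ih =>
      rw [Function.iterate_succ_apply', ih, jackson_monomial]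
      have h1 : (d - Finsupp.single i k) i = d i - k := by
        simp [Finsupp.tsub_apply]
      have h2 : d - Finsupp.single i k - Finsupp.single i 1 = d - Finsupp.single i (k + 1) := by
        rw [tsub_tsub, ← Finsupp.single_add]
      rw [h1, h2, Finset.prod_range_succ]
      congr 1
      ring

lemma jackson_add {n : ℕ} (i : Fin n) (f g : MvPolynomial (Fin n) (RatFunc ℚ)) :
    jackson i (f + g) = jackson i f + jackson i g := by
  rw [jackson, jackson, jackson, Tq, Tq, Tq, map_add]
  rw [show f + g - (aeval _ f + aeval _ g) = (f - aeval _ f) + (g - aeval _ g) by ring,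
    MvPolynomial.add_divMonomial, mul_add]

lemma jackson_zero {n : ℕ} (i : Fin n) : jackson i 0 = 0 := by
  simp [jackson, Tq]

lemma jackson_iter_add {n : ℕ} (i : Fin n) (k : ℕ) (f g : MvPolynomial (Fin n) (RatFunc ℚ)) :
    (jackson i)^[k] (f + g) = (jackson i)^[k] f + (jackson i)^[k] g := by
  induction k generalizing f g with
  | zero => simp
  | succ k ih =>
      rw [Function.iterate_succ_apply, jackson_add, ih,
        Function.iterate_succ_apply, Function.iterate_succ_apply]

lemma jackson_iter_zero {n : ℕ} (i : Fin n) (k : ℕ) :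
    (jackson i)^[k] (0 : MvPolynomial (Fin n) (RatFunc ℚ)) = 0 := by
  induction k with
  | zero => simp
  | succ k ih => rw [Function.iterate_succ_apply, jackson_zero, ih]

lemma foldr_op_add {M : Type*} [AddCommMonoid M] :
    ∀ (m : ℕ) (F : Fin m → M → M),
      (∀ i f g, F i (f + g) = F i f + F i g) →
      ∀ f g, Fin.foldr m (fun i x => F i x) (f + g) =
        Fin.foldr m (fun i x => F i x) f + Fin.foldr m (fun i x => F i x) g := by
  intro m
  induction m with
  | zero => intro F _ f g; simp
  | succ m ih =>
      intro F hF f g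
      rw [Fin.foldr_succ, Fin.foldr_succ, Fin.foldr_succ,
        ih (fun i => F i.succ) (fun i => hF i.succ) f g, hF]

lemma foldr_op_zero {M : Type*} [AddCommMonoid M] :
    ∀ (m : ℕ) (F : Fin m → M → M), (∀ i, F i 0 = 0) →
      Fin.foldr m (fun i x => F i x) (0 : M) = 0 := by
  intro m
  induction m with
  | zero => intro F _; simp
  | succ m ih =>
      intro F hF
      rw [Fin.foldr_succ, ih (fun i => F i.succ) (fun i => hF i.succ), hF]

lemma foldr_op_sum {M : Type*} [AddCommMonoid M] {ι : Type*} (m : ℕ) (F : Fin m → M → M)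
    (hF : ∀ i f g, F i (f + g) = F i f + F i g) (hF0 : ∀ i, F i 0 = 0)
    (s : Finset ι) (g : ι → M) :
    Fin.foldr m (fun i x => F i x) (∑ x ∈ s, g x) =
      ∑ x ∈ s, Fin.foldr m (fun i x => F i x) (g x) := by
  classical
  induction s using Finset.induction_on with
  | empty => simpa using foldr_op_zero m F hF0
  | insert _ _ hx ih =>
      rw [Finset.sum_insert hx, Finset.sum_insert hx, foldr_op_add m F hF, ih]

lemma fold_monomial {n : ℕ} (w : Fin n → ℕ) :
    ∀ (m : ℕ) (h : m ≤ n) (d : Fin n →₀ ℕ) (c : RatFunc ℚ),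
      Fin.foldr m (fun i f => (jackson (Fin.castLE h i))^[w (Fin.castLE h i)] f)
          (monomial d c)
        = monomial (d - ∑ i : Fin m, Finsupp.single (Fin.castLE h i) (w (Fin.castLE h i)))
            ((∏ i : Fin m, ∏ t ∈ Finset.range (w (Fin.castLE h i)),
               (1 - RatFunc.X)⁻¹ * (1 - RatFunc.X ^ (d (Fin.castLE h i) - t))) * c) := by
  intro m
  induction m with
  | zero => intro h d c; simp
  | succ m ihm =>
      intro h d c
      have h' : m ≤ n := le_trans (Nat.le_succ m) h
      set j : Fin n := Fin.castLE h (Fin.last m) with hj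
      rw [Fin.foldr_succ_last, jackson_iterate]
      rw [show (fun (i : Fin m) (f : MvPolynomial (Fin n) (RatFunc ℚ)) =>
            (jackson (Fin.castLE h i.castSucc))^[w (Fin.castLE h i.castSucc)] f)
          = (fun (i : Fin m) (f : MvPolynomial (Fin n) (RatFunc ℚ)) =>
            (jackson (Fin.castLE h' i))^[w (Fin.castLE h' i)] f) from rfl]
      rw [ihm h']
      have hd1 : ∀ i : Fin m, (d - Finsupp.single j (w j)) (Fin.castLE h' i) = d (Fin.castLE h' i) := by
        intro i
        have hne : j ≠ Fin.castLE h' i := by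
          intro hcontra
          have := congrArg (Fin.val) hcontra
          simp [hj, Fin.last] at this
          omega
        rw [Finsupp.tsub_apply, Finsupp.single_apply, if_neg hne, Nat.sub_zero]
      congr 1
      · rw [tsub_tsub, Fin.sum_univ_castSucc (f := fun i : Fin (m+1) =>
          Finsupp.single (Fin.castLE h i) (w (Fin.castLE h i))), add_comm]
        rfl
      · rw [Fin.prod_univ_castSucc (M := RatFunc ℚ) (f := fun i : Fin (m+1) =>
          ∏ t ∈ Finset.range (w (Fin.castLE h i)),
            (1 - RatFunc.X)⁻¹ * (1 - RatFunc.X ^ (d (Fin.castLE h i) - t)))]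
        have : (∏ i : Fin m, ∏ t ∈ Finset.range (w (Fin.castLE h' i)),
            (1 - RatFunc.X)⁻¹ * (1 - RatFunc.X ^ ((d - Finsupp.single j (w j)) (Fin.castLE h' i) - t)) : RatFunc ℚ)
            = ∏ i : Fin m, ∏ t ∈ Finset.range (w (Fin.castLE h' i)),
            (1 - RatFunc.X)⁻¹ * (1 - RatFunc.X ^ (d (Fin.castLE h' i) - t)) := by
          apply Finset.prod_congr rfl
          intro i _
          rw [hd1 i]
        rw [this, ← mul_assoc]
        rfl

lemma foldD_monomial {n : ℕ} (w : Fin n → ℕ) (d : Fin n →₀ ℕ) (c : RatFunc ℚ) :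
    Fin.foldr n (fun i f => (jackson i)^[w i] f) (monomial d c)
      = monomial (d - ∑ i : Fin n, Finsupp.single i (w i))
          ((∏ i : Fin n, ∏ t ∈ Finset.range (w i),
             (1 - RatFunc.X)⁻¹ * (1 - RatFunc.X ^ (d i - t))) * c) :=
  fold_monomial w n le_rfl d c

lemma sum_single_eq {n : ℕ} (w : Fin n → ℕ) :
    (∑ i : Fin n, Finsupp.single i (w i)) = Finsupp.equivFunOnFinite.symm w := by
  ext j
  rw [Finset.sum_apply']
  simp [Finsupp.single_apply, Finset.sum_ite_eq]

end

/-- With `w` a lattice point of `P(a)` maximizing the coordinate sum,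
`(d/dx₁)_q^{w₁} ∘ ⋯ ∘ (d/dxₙ)_q^{wₙ}` applied to `RS_a(x;q)` is a nonzero constant. -/
theorem stmt7 (n r : ℕ) (hn : 0 < n) (hnr : n < r) (v : Fin r → Fin n → ℤ)
    (hv : ∀ i : Fin r, (i : ℕ) < n → ∀ j : Fin n, v i j = if (j : ℕ) = (i : ℕ) then 1 else 0)
    (hsym : ∀ j, ∑ i, v i j = 0)
    (a : Fin r → ℤ) (ha : ∀ i : Fin r, (i : ℕ) < n → a i = 0)
    (w : Fin n → ℕ)
    (hwP : ∀ i, -(a i) ≤ ∑ j, (w j : ℤ) * v i j)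
    (hwmax : ∀ u : Fin n → ℕ, (∀ i, -(a i) ≤ ∑ j, (u j : ℤ) * v i j) → ∑ j, u j ≤ ∑ j, w j) :
    ∃ c : RatFunc ℚ, c ≠ 0 ∧
      Fin.foldr n (fun i f => (jackson i)^[w i] f) (RSgen n r v a) = MvPolynomial.C c := by
  classical
  set S := ∑ j, w j with hS
  set coef : (Fin n → ℕ) → RatFunc ℚ := fun u =>
    qqPoch RatFunc.X (∑ i, a i).toNat /
      ∏ i, qqPoch RatFunc.X ((∑ j, (u j : ℤ) * v i j) + a i).toNat with hcoef
  set term : (Fin n → ℕ) → MvPolynomial (Fin n) (RatFunc ℚ) := fun u =>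
    if ∀ i, -(a i) ≤ ∑ j, (u j : ℤ) * v i j then
      MvPolynomial.monomial (Finsupp.equivFunOnFinite.symm u) (coef u)
    else 0 with hterm
  set F : Finset (Fin n → ℕ) := Fintype.piFinset fun _ : Fin n => Finset.range (S + 1) with hF
  have hsupp : Function.support term ⊆ (F : Set (Fin n → ℕ)) := by
    intro u hu
    have hcond : ∀ i, -(a i) ≤ ∑ j, (u j : ℤ) * v i j := by
      by_contra hc
      apply hu
      simp only [hterm, if_neg hc]
    have hsum : ∑ j, u j ≤ S := hwmax u hcond
    simp only [hF, Finset.coe_sort_coe, Set.mem_setOf_eq, Finset.mem_coe,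
      Fintype.mem_piFinset, Finset.mem_range]
    intro j
    have : u j ≤ ∑ j, u j := Finset.single_le_sum (f := u) (fun _ _ => Nat.zero_le _)
      (Finset.mem_univ j)
    omega
  have hRS : RSgen n r v a = ∑ u ∈ F, term u := by
    rw [RSgen]
    exact finsum_eq_sum_of_support_subset term hsupp
  rw [hRS]
  rw [foldr_op_sum n (fun i => (jackson i)^[w i])
    (fun i => jackson_iter_add i (w i)) (fun i => jackson_iter_zero i (w i)) F term]
  have hwF : w ∈ F := by
    simp only [hF, Fintype.mem_piFinset, Finset.mem_range]
    intro j
    have : w j ≤ S := Finset.single_le_sum (f := w) (fun _ _ => Nat.zero_le _)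
      (Finset.mem_univ j)
    omega
  have hkill : ∀ u ∈ F, u ≠ w →
      Fin.foldr n (fun i f => (jackson i)^[w i] f) (term u) = 0 := by
    intro u _ hune
    by_cases hcond : ∀ i, -(a i) ≤ ∑ j, (u j : ℤ) * v i j
    · have hlt : ∃ i, u i < w i := by
        by_contra hc
        push_neg at hc
        have hle : ∑ j, u j ≤ S := hwmax u hcond
        have hgt : S < ∑ j, u j := by
          have hne2 : ∃ i, w i < u i := by
            by_contra hc2
            push_neg at hc2
            exact hune (funext fun i => le_antisymm (hc2 i) (hc i))
          obtain ⟨i, hi⟩ := hne2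
          calc S = ∑ j, w j := hS
          _ < ∑ j, u j := Finset.sum_lt_sum (fun j _ => hc j) ⟨i, Finset.mem_univ i, hi⟩
        omega
      obtain ⟨i, hi⟩ := hlt
      simp only [hterm, if_pos hcond]
      rw [foldD_monomial]
      have hzero : (∏ i : Fin n, ∏ t ∈ Finset.range (w i),
          (1 - RatFunc.X)⁻¹ *
            (1 - RatFunc.X ^ ((Finsupp.equivFunOnFinite.symm u) i - t)) : RatFunc ℚ) = 0 := by
        apply Finset.prod_eq_zero (Finset.mem_univ i)
        apply Finset.prod_eq_zero (Finset.mem_range.mpr hi)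
        have : (Finsupp.equivFunOnFinite.symm u) i = u i := rfl
        rw [this, Nat.sub_self, pow_zero, sub_self, mul_zero]
      rw [hzero, zero_mul, MvPolynomial.monomial_zero]
    · simp only [hterm, if_neg hcond]
      exact foldr_op_zero n (fun i => (jackson i)^[w i]) (fun i => jackson_iter_zero i (w i))
  rw [Finset.sum_eq_single_of_mem w hwF hkill]
  have hcondw : ∀ i, -(a i) ≤ ∑ j, (w j : ℤ) * v i j := hwP
  simp only [hterm, if_pos hcondw]
  rw [foldD_monomial, sum_single_eq, tsub_self, MvPolynomial.monomial_zero']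
  refine ⟨_, ?_, rfl⟩
  apply mul_ne_zero
  · apply Finset.prod_ne_zero_iff.mpr
    intro i _
    apply Finset.prod_ne_zero_iff.mpr
    intro t ht
    apply mul_ne_zero
    · apply inv_ne_zero
      have := one_sub_X_pow_ne (m := 1) one_pos
      rwa [pow_one] at this
    · apply one_sub_X_pow_ne
      have : (Finsupp.equivFunOnFinite.symm w) i = w i := rfl
      rw [this]
      have := Finset.mem_range.mp ht
      omega
  · exact div_ne_zero (qqPoch_ne _) (Finset.prod_ne_zero_iff.mpr fun i _ => qqPoch_ne _)
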